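/- Perron's formula for Riesz sums: let φ(w) = ∑_{n=1}^∞ α_n / λ_n^w be a Dirichlet series absolutely convergent for Re(w) = C > 0, with λ_n increasing positive reals. Then for κ a positive integer and x > 0, (1/Γ(κ+1)) ∑'_{λ_n ≤ x} α_n (x - λ_n)^κ = (1/2πi) ∫_{(C)} Γ(w) φ(w) x^{κ+w} / Γ(w + κ + 1) dw, where the integral is over the vertical line Re(w) = C and the primed sum halves a term with λ_n = x. -/

import Mathlib

open scoped BigOperators

open MeasureTheory Set

noncomputable section


noncomputable def perronAux_ker (κ : ℕ) (t : ℝ) : ℂ := ((max (1 - t) 0 : ℝ) : ℂ) ^ κ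

lemma perronAux_continuous_ker (κ : ℕ) : Continuous (perronAux_ker κ) :=
  (Complex.continuous_ofReal.comp ((continuous_const.sub continuous_id).max continuous_const)).pow κ

lemma perronAux_ker_eq_zero {κ : ℕ} (hκ : 1 ≤ κ) {t : ℝ} (ht : 1 ≤ t) : perronAux_ker κ t = 0 := by
  have h : max (1 - t) 0 = 0 := max_eq_right (by linarith)
  simp [perronAux_ker, h, zero_pow (by omega : κ ≠ 0)]

lemma perronAux_norm_ker_le {κ : ℕ} {t : ℝ} (ht : 0 ≤ t) : ‖perronAux_ker κ t‖ ≤ 1 := by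
  rw [perronAux_ker, norm_pow, Complex.norm_real, Real.norm_eq_abs,
    abs_of_nonneg (le_max_right _ _)]
  exact pow_le_one₀ (le_max_right _ _) (max_le (by linarith) zero_le_one)

lemma perronAux_gamma_ne_zero {w : ℂ} (hw : 0 < w.re) : Complex.Gamma w ≠ 0 := by
  apply Complex.Gamma_ne_zero
  intro m h
  have h2 := congrArg Complex.re h
  simp only [Complex.neg_re, Complex.natCast_re] at h2
  have : (0:ℝ) ≤ (m:ℝ) := m.cast_nonneg
  linarith

lemma perronAux_gamma_prod (κ : ℕ) : ∀ w : ℂ, 0 < w.re →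
    Complex.Gamma (w + κ + 1) = Complex.Gamma w * ∏ j ∈ Finset.range (κ + 1), (w + j) := by
  induction κ with
  | zero =>
      intro w hw
      have hw0 : w ≠ 0 := fun h => by simp [h] at hw
      simp [Complex.Gamma_add_one w hw0, mul_comm]
  | succ n ih =>
      intro w hw
      have hne : w + n + 1 ≠ 0 := by
        intro h
        have h2 := congrArg Complex.re h
        have hn : (0:ℝ) ≤ (n:ℝ) := n.cast_nonneg
        simp [Complex.add_re] at h2
        linarith
      have h2 : w + ((n+1 : ℕ):ℂ) + 1 = (w + n + 1) + 1 := by push_cast; ring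
      have h3 : ∏ j ∈ Finset.range (n+1+1), (w+↑j)
          = (∏ j ∈ Finset.range (n+1), (w+↑j)) * (w + ↑(n+1)) := Finset.prod_range_succ _ _
      rw [h2, Complex.Gamma_add_one _ hne, ih w hw, h3]
      push_cast
      ring

lemma perronAux_contOn_cpow {w : ℂ} : ContinuousOn (fun t : ℝ => (t:ℂ) ^ (w - 1)) (Ioc (0:ℝ) 1) := by
  intro t ht
  exact ((continuousAt_cpow_const
    (Complex.ofReal_mem_slitPlane.2 ht.1)).comp
      Complex.continuous_ofReal.continuousAt).continuousWithinAt

lemma perronAux_mellin_conv (κ : ℕ) (hκ : 1 ≤ κ) {w : ℂ} (hw : 0 < w.re) :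
    MellinConvergent (perronAux_ker κ) w := by
  unfold MellinConvergent
  rw [← Ioc_union_Ioi_eq_Ioi (zero_le_one : (0:ℝ) ≤ 1), integrableOn_union]
  constructor
  · simp_rw [smul_eq_mul]
    have hbase : IntegrableOn (fun t : ℝ => t ^ (w.re - 1)) (Ioc (0:ℝ) 1) := by
      have h := intervalIntegral.intervalIntegrable_rpow' (r := w.re - 1) (by linarith)
        (a := 0) (b := 1)
      rwa [intervalIntegrable_iff_integrableOn_Ioc_of_le zero_le_one] at h
    apply Integrable.mono hbase
    · exact (perronAux_contOn_cpow.mul (perronAux_continuous_ker κ).continuousOn).aestronglyMeasurable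
        measurableSet_Ioc
    · rw [ae_restrict_iff' measurableSet_Ioc]
      filter_upwards with t ht
      rw [norm_mul, Complex.norm_cpow_eq_rpow_re_of_pos ht.1,
        Complex.sub_re, Complex.one_re, Real.norm_eq_abs,
        abs_of_nonneg (Real.rpow_nonneg ht.1.le _)]
      calc t ^ (w.re - 1) * ‖perronAux_ker κ t‖ ≤ t ^ (w.re - 1) * 1 :=
            mul_le_mul_of_nonneg_left (perronAux_norm_ker_le ht.1.le) (Real.rpow_nonneg ht.1.le _)
        _ = t ^ (w.re - 1) := mul_one _
  · exact (integrableOn_congr_fun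
      (fun t ht => by simp [perronAux_ker_eq_zero hκ (le_of_lt ht)]) measurableSet_Ioi).mpr
      (integrableOn_zero)

lemma perronAux_mellin_ker {κ : ℕ} (hκ : 1 ≤ κ) {w : ℂ} (hw : 0 < w.re) :
    mellin (perronAux_ker κ) w
      = Complex.Gamma w * Complex.Gamma ((κ:ℂ) + 1) / Complex.Gamma (w + κ + 1) := by
  have hκre : 0 < ((κ:ℂ) + 1).re := by
    simp only [Complex.add_re, Complex.natCast_re, Complex.one_re]
    positivity
  have hGne : Complex.Gamma (w + κ + 1) ≠ 0 := by
    apply perronAux_gamma_ne_zero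
    simp only [Complex.add_re, Complex.natCast_re, Complex.one_re]
    positivity
  have hmb : mellin (perronAux_ker κ) w = Complex.betaIntegral w ((κ:ℂ) + 1) := by
    have hconv := perronAux_mellin_conv κ hκ hw
    unfold MellinConvergent at hconv
    rw [← Ioc_union_Ioi_eq_Ioi (zero_le_one : (0:ℝ) ≤ 1), integrableOn_union] at hconv
    rw [mellin, ← Ioc_union_Ioi_eq_Ioi (zero_le_one : (0:ℝ) ≤ 1),
      setIntegral_union (Ioc_disjoint_Ioi le_rfl) measurableSet_Ioi hconv.1 hconv.2]
    have h0 : ∫ t in Ioi (1:ℝ), (t:ℂ) ^ (w - 1) • perronAux_ker κ t = 0 := by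
      apply integral_eq_zero_of_ae
      rw [Filter.EventuallyEq, ae_restrict_iff' measurableSet_Ioi]
      filter_upwards with t ht
      simp [perronAux_ker_eq_zero hκ (le_of_lt ht)]
    rw [h0, add_zero, Complex.betaIntegral, intervalIntegral.integral_of_le zero_le_one]
    apply setIntegral_congr_fun measurableSet_Ioc
    intro t ht
    have hmax : max (1 - t) 0 = 1 - t := max_eq_left (by linarith [ht.2])
    simp only [smul_eq_mul, perronAux_ker, hmax]
    congr 1
    rw [show (κ:ℂ) + 1 - 1 = ((κ:ℕ):ℂ) by ring, Complex.cpow_natCast]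
    push_cast
    ring
  have hbeta := Complex.Gamma_mul_Gamma_eq_betaIntegral hw hκre
  rw [show w + ((κ:ℂ) + 1) = w + κ + 1 by ring] at hbeta
  rw [hmb, eq_div_iff hGne]
  linear_combination -hbeta

lemma perronAux_aux_integrable {C : ℝ} (hC : 0 < C) :
    Integrable (fun t : ℝ => (C^2 + t^2)⁻¹) := by
  have heq : (fun t : ℝ => (C^2 + t^2)⁻¹)
      = fun t : ℝ => (C^2)⁻¹ * (1 + (t/C)^2)⁻¹ := by
    funext t
    rw [← mul_inv]
    congr 1
    field_simp
  rw [heq]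
  exact (integrable_inv_one_add_sq.comp_div hC.ne').const_mul _

lemma perronAux_factor_norm (C : ℝ) (t : ℝ) (j : ℕ) :
    ‖(C:ℂ) + t * Complex.I + j‖ = Real.sqrt ((C + j)^2 + t^2) := by
  rw [Complex.norm_def, Complex.normSq_apply]
  congr 1
  simp [Complex.add_re, Complex.mul_re]
  ring

lemma perronAux_prod_lower {C : ℝ} (hC : 0 < C) {κ : ℕ} (hκ : 1 ≤ κ) (t : ℝ) :
    (C^2 + t^2) * C^(κ-1) ≤ ‖∏ j ∈ Finset.range (κ+1), ((C:ℂ) + t * Complex.I + j)‖ := by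
  set a : ℕ → ℝ := fun j => ‖(C:ℂ) + t * Complex.I + (j:ℕ)‖ with ha_def
  have ha : ∀ j : ℕ, a j = Real.sqrt ((C + j)^2 + t^2) := fun j => perronAux_factor_norm C t j
  have hCj : ∀ j : ℕ, C ≤ a j := by
    intro j
    rw [ha j]
    have h2 : Real.sqrt (C^2) ≤ Real.sqrt ((C + j)^2 + t^2) := by
      apply Real.sqrt_le_sqrt
      have : (0:ℝ) ≤ (j:ℝ) := j.cast_nonneg
      nlinarith [sq_nonneg t]
    rwa [Real.sqrt_sq hC.le] at h2
  have key2 : C^2 + t^2 ≤ a 0 * a 1 := by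
    have h0 : a 0 = Real.sqrt (C^2 + t^2) := by rw [ha 0]; norm_num
    have h1 : Real.sqrt (C^2 + t^2) ≤ a 1 := by
      rw [ha 1]
      apply Real.sqrt_le_sqrt
      push_cast
      nlinarith
    calc C^2 + t^2 = Real.sqrt (C^2 + t^2) * Real.sqrt (C^2 + t^2) :=
          (Real.mul_self_sqrt (by positivity)).symm
      _ ≤ a 0 * a 1 := by
          rw [h0]
          exact mul_le_mul_of_nonneg_left h1 (Real.sqrt_nonneg _)
  have hprodC : C^(κ-1) ≤ ∏ j ∈ Finset.Ico 2 (κ+1), a j := by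
    calc C^(κ-1) = ∏ _j ∈ Finset.Ico 2 (κ+1), C := by
          rw [Finset.prod_const, Nat.card_Ico]
          congr 1
      _ ≤ ∏ j ∈ Finset.Ico 2 (κ+1), a j :=
          Finset.prod_le_prod (fun _ _ => hC.le) (fun j _ => hCj j)
  have hnorm : ‖∏ j ∈ Finset.range (κ+1), ((C:ℂ) + t * Complex.I + j)‖
      = ∏ j ∈ Finset.range (κ+1), a j := norm_prod _ _
  rw [hnorm, ← Finset.prod_range_mul_prod_Ico a (show 2 ≤ κ+1 by omega)]
  have hr2 : ∏ j ∈ Finset.range 2, a j = a 0 * a 1 := by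
    simp [Finset.prod_range_succ]
  rw [hr2]
  exact mul_le_mul key2 hprodC (by positivity) (mul_nonneg (norm_nonneg _) (norm_nonneg _))

-- new material: perronAux_vertical integrability
lemma perronAux_wre (C t : ℝ) : ((C:ℂ) + t * Complex.I).re = C := by simp

lemma perronAux_prod_ne_zero {C : ℝ} (hC : 0 < C) (κ : ℕ) (t : ℝ) :
    ∏ j ∈ Finset.range (κ+1), ((C:ℂ) + t * Complex.I + j) ≠ 0 := by
  rw [Finset.prod_ne_zero_iff]
  intro j _
  intro h
  have h2 := congrArg Complex.re h
  simp only [Complex.add_re, Complex.natCast_re, Complex.zero_re, Complex.ofReal_re,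
    Complex.mul_re, Complex.I_re, Complex.I_im, Complex.ofReal_im, mul_zero, mul_one,
    zero_mul, sub_zero, zero_sub, neg_zero, add_zero, zero_add] at h2
  have : (0:ℝ) ≤ (j:ℝ) := j.cast_nonneg
  linarith

lemma perronAux_mellin_on_line {κ : ℕ} (hκ : 1 ≤ κ) {C : ℝ} (hC : 0 < C) (t : ℝ) :
    mellin (perronAux_ker κ) ((C:ℂ) + t * Complex.I)
      = Complex.Gamma ((κ:ℂ)+1) / ∏ j ∈ Finset.range (κ+1), ((C:ℂ) + t * Complex.I + j) := by
  rw [perronAux_mellin_ker hκ (by rw [perronAux_wre]; exact hC),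
    perronAux_gamma_prod κ _ (by rw [perronAux_wre]; exact hC)]
  exact mul_div_mul_left _ _ (perronAux_gamma_ne_zero (by rw [perronAux_wre]; exact hC))

lemma perronAux_vertical {κ : ℕ} (hκ : 1 ≤ κ) {C : ℝ} (hC : 0 < C) :
    Integrable (fun t : ℝ => mellin (perronAux_ker κ) ((C:ℂ) + t * Complex.I)) := by
  have hD : Continuous (fun t : ℝ => ∏ j ∈ Finset.range (κ+1), ((C:ℂ) + t * Complex.I + j)) := by
    apply continuous_finset_prod
    intro j _
    fun_prop
  have hcont : Continuous (fun t : ℝ =>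
      Complex.Gamma ((κ:ℂ)+1) / ∏ j ∈ Finset.range (κ+1), ((C:ℂ) + t * Complex.I + j)) :=
    continuous_const.div hD (fun t => perronAux_prod_ne_zero hC κ t)
  have heq : (fun t : ℝ => mellin (perronAux_ker κ) ((C:ℂ) + t * Complex.I))
      = fun t : ℝ => Complex.Gamma ((κ:ℂ)+1)
        / ∏ j ∈ Finset.range (κ+1), ((C:ℂ) + t * Complex.I + j) :=
    funext (fun t => perronAux_mellin_on_line hκ hC t)
  rw [heq]
  refine Integrable.mono
    ((perronAux_aux_integrable hC).const_mul (‖Complex.Gamma ((κ:ℂ)+1)‖ / C^(κ-1)))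
    hcont.aestronglyMeasurable ?_
  filter_upwards with t
  have hDt := perronAux_prod_lower hC hκ t
  have hpos : (0:ℝ) < (C^2+t^2) * C^(κ-1) := by positivity
  have h1 : ‖Complex.Gamma ((κ:ℂ)+1)
        / ∏ j ∈ Finset.range (κ+1), ((C:ℂ) + t * Complex.I + j)‖
      ≤ ‖Complex.Gamma ((κ:ℂ)+1)‖ / ((C^2+t^2) * C^(κ-1)) := by
    rw [norm_div]
    gcongr
  have h2 : ‖Complex.Gamma ((κ:ℂ)+1)‖ / ((C^2+t^2) * C^(κ-1))
      = ‖Complex.Gamma ((κ:ℂ)+1)‖ / C^(κ-1) * (C^2+t^2)⁻¹ := by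
    rw [mul_comm, ← div_div, div_eq_mul_inv]
  have h3 : (0:ℝ) ≤ ‖Complex.Gamma ((κ:ℂ)+1)‖ / C^(κ-1) * (C^2+t^2)⁻¹ := by positivity
  rw [Real.norm_eq_abs, abs_of_nonneg h3]
  rw [h2] at h1
  exact h1

lemma perronAux_kernel_inv {κ : ℕ} (hκ : 1 ≤ κ) {C : ℝ} (hC : 0 < C) {y : ℝ} (hy : 0 < y) :
    ∫ t : ℝ, (y:ℂ) ^ (-((C:ℂ) + t * Complex.I)) * mellin (perronAux_ker κ) ((C:ℂ) + t * Complex.I)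
      = 2 * (Real.pi:ℂ) * perronAux_ker κ y := by
  have h := mellinInv_mellin_eq C (perronAux_ker κ) hy
    (perronAux_mellin_conv κ hκ (by rw [Complex.ofReal_re]; exact hC))
    (perronAux_vertical hκ hC) (perronAux_continuous_ker κ).continuousAt
  rw [mellinInv] at h
  simp_rw [smul_eq_mul] at h
  rw [Complex.real_smul] at h
  have hπ : (Real.pi:ℂ) ≠ 0 := by exact_mod_cast Real.pi_ne_zero
  have hc : ((1 / (2 * Real.pi) : ℝ) : ℂ) = 1 / (2 * (Real.pi:ℂ)) := by push_cast; ring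
  rw [hc] at h
  have h2 : (2*(Real.pi:ℂ)) ≠ 0 := by simp [hπ]
  calc ∫ t : ℝ, (y:ℂ) ^ (-((C:ℂ) + t * Complex.I)) * mellin (perronAux_ker κ) ((C:ℂ) + t * Complex.I)
      = 2 * (Real.pi:ℂ) * ((1 / (2 * (Real.pi:ℂ))) *
        ∫ t : ℝ, (y:ℂ) ^ (-((C:ℂ) + t * Complex.I)) * mellin (perronAux_ker κ) ((C:ℂ) + t * Complex.I)) := by
        rw [← mul_assoc, mul_one_div, div_self h2, one_mul]
    _ = 2 * (Real.pi:ℂ) * perronAux_ker κ y := by rw [h]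

lemma perronAux_cont_cpow_line {y : ℝ} (hy : 0 < y) (C : ℝ) :
    Continuous fun t : ℝ => (y:ℂ) ^ (-((C:ℂ) + t * Complex.I)) := by
  have hy0 : (y:ℂ) ≠ 0 := Complex.ofReal_ne_zero.2 hy.ne'
  have heq : (fun t : ℝ => (y:ℂ) ^ (-((C:ℂ) + t * Complex.I)))
      = fun t : ℝ => Complex.exp (Complex.log y * -((C:ℂ) + t * Complex.I)) :=
    funext fun t => Complex.cpow_def_of_ne_zero hy0 _
  rw [heq]
  exact Complex.continuous_exp.comp (by fun_prop)

lemma perronAux_norm_cpow_line {y : ℝ} (hy : 0 < y) (C t : ℝ) :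
    ‖(y:ℂ) ^ (-((C:ℂ) + t * Complex.I))‖ = y ^ (-C : ℝ) := by
  rw [Complex.norm_cpow_eq_rpow_re_of_pos hy]
  congr 1
  simp [Complex.neg_re, perronAux_wre]

/-- The Riesz sum of order `κ`: `∑'_{λ_n ≤ x} (x - λ_n)^κ α_n`, with the term at
`λ_n = x` halved. -/
noncomputable def rieszSum (lam : ℕ → ℝ) (α : ℕ → ℂ) (κ : ℕ) (x : ℝ) : ℂ :=
  ∑' n : ℕ, if lam n < x then ((x - lam n : ℝ) : ℂ) ^ κ * α n
    else if lam n = x then ((x - lam n : ℝ) : ℂ) ^ κ * α n / 2 else 0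

/-- Perron's formula for Riesz sums: if the Dirichlet series
`φ(w) = ∑ α_n/λ_n^w` converges absolutely on the line `Re w = C > 0`, then for `κ ≥ 1`
and `x > 0`,
`(1/Γ(κ+1)) ∑'_{λ_n ≤ x} α_n (x-λ_n)^κ
  = (1/2πi) ∫_{(C)} Γ(w) φ(w) x^{κ+w}/Γ(w+κ+1) dw`. -/
theorem perron_riesz (lam : ℕ → ℝ) (α : ℕ → ℂ) (hmono : StrictMono lam)
    (hpos : ∀ n, 0 < lam n) (C : ℝ) (hC : 0 < C)
    (habs : Summable fun n : ℕ => ‖α n‖ / lam n ^ C)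
    (κ : ℕ) (hκ : 1 ≤ κ) (x : ℝ) (hx : 0 < x) :
    (1 / Complex.Gamma ((κ : ℂ) + 1)) * rieszSum lam α κ x =
      (1 / (2 * Real.pi * Complex.I)) *
        ∫ t : ℝ, (Complex.Gamma ((C : ℂ) + t * Complex.I) *
            (∑' n : ℕ, α n / ((lam n : ℂ)) ^ ((C : ℂ) + t * Complex.I)) *
            ((x : ℂ)) ^ ((κ : ℂ) + (C : ℂ) + t * Complex.I) /
            Complex.Gamma (((C : ℂ) + t * Complex.I) + (κ : ℂ) + 1)) * Complex.I := by
  have hΓκ : Complex.Gamma ((κ:ℂ) + 1) ≠ 0 := by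
    apply perronAux_gamma_ne_zero
    simp only [Complex.add_re, Complex.natCast_re, Complex.one_re]
    positivity
  have hxC : (x:ℂ) ≠ 0 := Complex.ofReal_ne_zero.2 hx.ne'
  have hyn : ∀ n, 0 < lam n / x := fun n => div_pos (hpos n) hx
  set G : ℕ → ℝ → ℂ := fun n t =>
    Complex.Gamma ((C:ℂ) + t * Complex.I) *
      (α n / (lam n : ℂ) ^ ((C:ℂ) + t * Complex.I)) *
      (x:ℂ) ^ ((κ:ℂ) + (C:ℂ) + t * Complex.I) /
      Complex.Gamma (((C:ℂ) + t * Complex.I) + (κ:ℂ) + 1) * Complex.I with hGdef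
  have hG : ∀ n t, G n t =
      (Complex.I * α n * (x:ℂ) ^ κ / Complex.Gamma ((κ:ℂ) + 1)) *
        (((lam n / x : ℝ) : ℂ) ^ (-((C:ℂ) + t * Complex.I)) *
          mellin (perronAux_ker κ) ((C:ℂ) + t * Complex.I)) := by
    intro n t
    have hwre : ((C:ℂ) + t * Complex.I).re = C := perronAux_wre C t
    have hl : (0:ℝ) < lam n := hpos n
    have h1 : ((lam n / x : ℝ) : ℂ) ^ (-((C:ℂ) + t * Complex.I))
        = ((lam n : ℂ) ^ ((C:ℂ) + t * Complex.I))⁻¹ * (x:ℂ) ^ ((C:ℂ) + t * Complex.I) := by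
      rw [show (lam n / x : ℝ) = lam n * x⁻¹ from div_eq_mul_inv _ _, Complex.ofReal_mul]
      rw [Complex.mul_cpow_ofReal_nonneg hl.le (inv_nonneg.2 hx.le)]
      rw [Complex.ofReal_inv]
      rw [Complex.inv_cpow _ _ (by
        rw [Complex.arg_ofReal_of_nonneg hx.le]
        exact Ne.symm Real.pi_ne_zero)]
      rw [Complex.cpow_neg ((lam n : ℝ) : ℂ), Complex.cpow_neg ((x:ℝ):ℂ), inv_inv]
    have h2 : (x:ℂ) ^ ((κ:ℂ) + (C:ℂ) + t * Complex.I)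
        = (x:ℂ) ^ κ * (x:ℂ) ^ ((C:ℂ) + t * Complex.I) := by
      rw [add_assoc, Complex.cpow_add _ _ hxC, Complex.cpow_natCast]
    have hlw : (lam n : ℂ) ^ ((C:ℂ) + t * Complex.I) ≠ 0 := by
      intro h
      rw [Complex.cpow_eq_zero_iff] at h
      exact (Complex.ofReal_ne_zero.2 hl.ne') h.1
    rw [hGdef]
    simp only
    rw [perronAux_mellin_ker hκ (by rw [hwre]; exact hC), h1, h2]
    have hΓ2 : Complex.Gamma (((C:ℂ) + t * Complex.I) + (κ:ℂ) + 1) ≠ 0 := by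
      apply perronAux_gamma_ne_zero
      simp only [Complex.add_re, Complex.natCast_re, Complex.one_re, hwre]
      positivity
    field_simp
  have hMint : Integrable (fun t : ℝ => mellin (perronAux_ker κ) ((C:ℂ) + t * Complex.I)) :=
    perronAux_vertical hκ hC
  have hHint : ∀ n, Integrable (fun t : ℝ =>
      ((lam n / x : ℝ) : ℂ) ^ (-((C:ℂ) + t * Complex.I)) *
        mellin (perronAux_ker κ) ((C:ℂ) + t * Complex.I)) := fun n =>
    hMint.bdd_mul (perronAux_cont_cpow_line (hyn n) C).aestronglyMeasurable
      (Filter.Eventually.of_forall fun t => le_of_eq (perronAux_norm_cpow_line (hyn n) C t))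
  have hGfun : ∀ n, G n = fun t : ℝ =>
      (Complex.I * α n * (x:ℂ) ^ κ / Complex.Gamma ((κ:ℂ) + 1)) *
        (((lam n / x : ℝ) : ℂ) ^ (-((C:ℂ) + t * Complex.I)) *
          mellin (perronAux_ker κ) ((C:ℂ) + t * Complex.I)) := fun n => funext (hG n)
  have hGint : ∀ n, Integrable (G n) := by
    intro n
    rw [hGfun n]
    exact (hHint n).const_mul _
  have hval : ∀ n, ∫ t : ℝ, G n t
      = 2 * (Real.pi:ℂ) * Complex.I *
        (α n * (x:ℂ) ^ κ * perronAux_ker κ (lam n / x) / Complex.Gamma ((κ:ℂ) + 1)) := by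
    intro n
    rw [hGfun n, MeasureTheory.integral_const_mul, perronAux_kernel_inv hκ hC (hyn n)]
    ring
  have hM : ∀ n t, ‖G n t‖ =
      ‖α n‖ * x ^ κ / ‖Complex.Gamma ((κ:ℂ) + 1)‖ * (lam n / x) ^ (-C : ℝ) *
        ‖mellin (perronAux_ker κ) ((C:ℂ) + t * Complex.I)‖ := by
    intro n t
    rw [hG n t, norm_mul, norm_mul, perronAux_norm_cpow_line (hyn n) C t, norm_div, norm_mul, norm_mul,
      Complex.norm_I, one_mul, norm_pow, Complex.norm_real, Real.norm_eq_abs, abs_of_pos hx]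
    ring
  have hnormint : ∀ n, (∫ t : ℝ, ‖G n t‖)
      = ‖α n‖ * x ^ κ / ‖Complex.Gamma ((κ:ℂ) + 1)‖ * (lam n / x) ^ (-C : ℝ) *
        ∫ t : ℝ, ‖mellin (perronAux_ker κ) ((C:ℂ) + t * Complex.I)‖ := by
    intro n
    rw [show (fun t : ℝ => ‖G n t‖) = fun t : ℝ =>
        ‖α n‖ * x ^ κ / ‖Complex.Gamma ((κ:ℂ) + 1)‖ * (lam n / x) ^ (-C : ℝ) *
          ‖mellin (perronAux_ker κ) ((C:ℂ) + t * Complex.I)‖ from funext (hM n)]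
    exact MeasureTheory.integral_const_mul _ _
  have hrpow : ∀ n, (lam n / x : ℝ) ^ (-C : ℝ) = x ^ C / lam n ^ C := by
    intro n
    rw [Real.rpow_neg (hyn n).le, Real.div_rpow (hpos n).le hx.le, inv_div]
  have hSum : Summable fun n => ∫ t : ℝ, ‖G n t‖ := by
    apply Summable.congr (f := fun n =>
      (x ^ κ * x ^ C / ‖Complex.Gamma ((κ:ℂ) + 1)‖ *
        ∫ t : ℝ, ‖mellin (perronAux_ker κ) ((C:ℂ) + t * Complex.I)‖) * (‖α n‖ / lam n ^ C))
      (habs.mul_left _)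
    intro n
    rw [hnormint n, hrpow n]
    ring
  have hswap : ∑' n, ∫ t : ℝ, G n t = ∫ t : ℝ, ∑' n, G n t :=
    MeasureTheory.integral_tsum_of_summable_integral_norm hGint hSum
  have hpt : ∀ t : ℝ, (Complex.Gamma ((C:ℂ) + t * Complex.I) *
      (∑' n : ℕ, α n / (lam n : ℂ) ^ ((C:ℂ) + t * Complex.I)) *
      (x:ℂ) ^ ((κ:ℂ) + (C:ℂ) + t * Complex.I) /
      Complex.Gamma (((C:ℂ) + t * Complex.I) + (κ:ℂ) + 1)) * Complex.I
      = ∑' n, G n t := by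
    intro t
    have h1 : ∑' n, G n t
        = (∑' n : ℕ, α n / (lam n : ℂ) ^ ((C:ℂ) + t * Complex.I)) *
          (Complex.Gamma ((C:ℂ) + t * Complex.I) *
            (x:ℂ) ^ ((κ:ℂ) + (C:ℂ) + t * Complex.I) /
            Complex.Gamma (((C:ℂ) + t * Complex.I) + (κ:ℂ) + 1) * Complex.I) := by
      rw [← tsum_mul_right]
      apply tsum_congr
      intro n
      rw [hGdef]
      simp only
      ring
    rw [h1]
    ring
  have h2πI : (2 * (Real.pi:ℂ) * Complex.I) ≠ 0 :=
    mul_ne_zero (mul_ne_zero two_ne_zero (by exact_mod_cast Real.pi_ne_zero)) Complex.I_ne_zero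
  have hterm : ∀ n, (1 / Complex.Gamma ((κ:ℂ) + 1)) *
      (if lam n < x then ((x - lam n : ℝ) : ℂ) ^ κ * α n
        else if lam n = x then ((x - lam n : ℝ) : ℂ) ^ κ * α n / 2 else 0)
      = α n * (x:ℂ) ^ κ * perronAux_ker κ (lam n / x) / Complex.Gamma ((κ:ℂ) + 1) := by
    intro n
    rcases lt_trichotomy (lam n) x with h | h | h
    · rw [if_pos h]
      have hker : perronAux_ker κ (lam n / x) = ((1 - lam n / x : ℝ) : ℂ) ^ κ := by
        rw [perronAux_ker, max_eq_left (sub_nonneg.2 (le_of_lt ((div_lt_one hx).2 h)))]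
      have hmul : ((x : ℝ) : ℂ) * ((1 - lam n / x : ℝ) : ℂ) = ((x - lam n : ℝ) : ℂ) := by
        push_cast
        field_simp
      have hpow : ((x - lam n : ℝ) : ℂ) ^ κ
          = (x:ℂ) ^ κ * ((1 - lam n / x : ℝ) : ℂ) ^ κ := by
        rw [← mul_pow, hmul]
      rw [hker, hpow]
      ring
    · rw [if_neg (by rw [h]; exact lt_irrefl x), if_pos h]
      have h1 : ((x - lam n : ℝ) : ℂ) = 0 := by rw [h]; simp
      have h2 : perronAux_ker κ (lam n / x) = 0 := by
        rw [h, div_self hx.ne']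
        exact perronAux_ker_eq_zero hκ le_rfl
      rw [h1, h2, zero_pow (by omega : κ ≠ 0)]
      ring
    · rw [if_neg (not_lt.2 h.le), if_neg (ne_of_gt h)]
      have h2 : perronAux_ker κ (lam n / x) = 0 :=
        perronAux_ker_eq_zero hκ ((one_le_div hx).2 h.le)
      rw [h2]
      ring
  calc (1 / Complex.Gamma ((κ:ℂ) + 1)) * rieszSum lam α κ x
      = ∑' n, α n * (x:ℂ) ^ κ * perronAux_ker κ (lam n / x) / Complex.Gamma ((κ:ℂ) + 1) := by
        rw [rieszSum, ← tsum_mul_left]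
        exact tsum_congr hterm
    _ = (1 / (2 * Real.pi * Complex.I)) *
        ∫ t : ℝ, (Complex.Gamma ((C:ℂ) + t * Complex.I) *
            (∑' n : ℕ, α n / (lam n : ℂ) ^ ((C:ℂ) + t * Complex.I)) *
            (x:ℂ) ^ ((κ:ℂ) + (C:ℂ) + t * Complex.I) /
            Complex.Gamma (((C:ℂ) + t * Complex.I) + (κ:ℂ) + 1)) * Complex.I := by
        have hIeq : (∫ t : ℝ, (Complex.Gamma ((C:ℂ) + t * Complex.I) *
            (∑' n : ℕ, α n / (lam n : ℂ) ^ ((C:ℂ) + t * Complex.I)) *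
            (x:ℂ) ^ ((κ:ℂ) + (C:ℂ) + t * Complex.I) /
            Complex.Gamma (((C:ℂ) + t * Complex.I) + (κ:ℂ) + 1)) * Complex.I)
            = ∑' n, ∫ t : ℝ, G n t := by
          rw [hswap]
          congr 1
          funext t
          exact hpt t
        rw [hIeq]
        rw [show (∑' n, ∫ t : ℝ, G n t) = ∑' n, 2 * (Real.pi:ℂ) * Complex.I *
            (α n * (x:ℂ) ^ κ * perronAux_ker κ (lam n / x) / Complex.Gamma ((κ:ℂ) + 1)) from
          tsum_congr hval]
        rw [← tsum_mul_left]
        apply tsum_congr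
        intro n
        rw [show (1 : ℂ) / (2 * Real.pi * Complex.I) = (2 * (Real.pi:ℂ) * Complex.I)⁻¹ from
          one_div _]
        rw [inv_mul_cancel_left₀ h2πI]
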